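/- arXiv:2208.06289 — 2 statements merged into one kernel-verified Lean document; each statement's English description precedes it below -/
import Mathlib

section
/- Let H be a group in which every element satisfies h² = 1 (hence H is abelian), and let K be an abelian group. Equip the free abelian group (H × K) →₀ ℤ with the additive involution induced on basis elements by inversion (x ↦ x⁻¹ on H × K), and equip K →₀ ℤ with the additive involution induced by inversion on K. Then the coinvariants of the involution on (H × K) →₀ ℤ are isomorphic, as an abelian group, to the tensor product over ℤ of the free abelian group H →₀ ℤ with the coinvariants of the involution on K →₀ ℤ. -/
open scoped TensorProduct

set_option maxHeartbeats 1000000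
set_option synthInstance.maxHeartbeats 200000

/-- Let `H` be a group in which every element squares to the identity and let `K` be an
abelian group.  Equip `(H × K) →₀ ℤ` with the additive involution `I` induced by
inversion on `H × K`, and `K →₀ ℤ` with the additive involution `J` induced by inversion
on `K`.  Then the coinvariants of `I` are isomorphic, as an abelian group, to the tensor
product over `ℤ` of the free abelian group `H →₀ ℤ` with the coinvariants of `J`. -/
theorem coinvariants_prod_iso_tensor {H K : Type*} [Group H] [CommGroup K]
    (hH : ∀ h : H, h ^ 2 = 1)
    (I : ((H × K) →₀ ℤ) →+ ((H × K) →₀ ℤ))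
    (hI : ∀ x : H × K, I (Finsupp.single x 1) = Finsupp.single x⁻¹ 1)
    (J : (K →₀ ℤ) →+ (K →₀ ℤ))
    (hJ : ∀ k : K, J (Finsupp.single k 1) = Finsupp.single k⁻¹ 1)
    (C : AddSubgroup ((H × K) →₀ ℤ))
    (hC : C = AddSubgroup.closure (Set.range fun a => a - I a))
    (D : AddSubgroup (K →₀ ℤ))
    (hD : D = AddSubgroup.closure (Set.range fun a => a - J a)) :
    Nonempty ((((H × K) →₀ ℤ) ⧸ C) ≃+ ((H →₀ ℤ) ⊗[ℤ] ((K →₀ ℤ) ⧸ D))) := by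
  have hinv : ∀ h : H, h⁻¹ = h := fun h =>
    inv_eq_of_mul_eq_one_right (by rw [← sq]; exact hH h)
  set M := (H × K) →₀ ℤ
  set N := K →₀ ℤ
  set e := finsuppTensorFinsupp' ℤ H K with he
  -- quotient projections
  set mkC : M →+ M ⧸ C := QuotientAddGroup.mk' C with hmkC
  set mkD : N →+ N ⧸ D := QuotientAddGroup.mk' D with hmkD
  -- singles with arbitrary int coefficient
  have hIsingle : ∀ (x : H × K) (n : ℤ), I (Finsupp.single x n) = Finsupp.single x⁻¹ n := by
    intro x n
    have : Finsupp.single x n = n • Finsupp.single x (1 : ℤ) := by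
      rw [Finsupp.smul_single, smul_eq_mul, mul_one]
    rw [this, map_zsmul, hI, Finsupp.smul_single, smul_eq_mul, mul_one]
  have hJsingle : ∀ (k : K) (n : ℤ), J (Finsupp.single k n) = Finsupp.single k⁻¹ n := by
    intro k n
    have : Finsupp.single k n = n • Finsupp.single k (1 : ℤ) := by
      rw [Finsupp.smul_single, smul_eq_mul, mul_one]
    rw [this, map_zsmul, hJ, Finsupp.smul_single, smul_eq_mul, mul_one]
  -- the bilinear map (H →₀ ℤ) →ₗ N →ₗ M ⧸ C
  set Φ : (H →₀ ℤ) →ₗ[ℤ] N →ₗ[ℤ] (M ⧸ C) :=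
    TensorProduct.curry (mkC.toIntLinearMap ∘ₗ e.toLinearMap) with hΦ
  have hΦ_apply : ∀ f a, Φ f a = mkC (e (f ⊗ₜ a)) := fun f a => rfl
  -- key : Φ is invariant under J in the second variable
  have key : ∀ (f : H →₀ ℤ) (a : N), Φ f (J a) = Φ f a := by
    have h2 : Φ.compl₂ J.toIntLinearMap = Φ := by
      apply Finsupp.lhom_ext
      intro h m
      apply Finsupp.lhom_ext
      intro k n
      show Φ (Finsupp.single h m) (J (Finsupp.single k n)) = Φ _ _
      rw [hJsingle, hΦ_apply, hΦ_apply, he, finsuppTensorFinsupp'_single_tmul_single,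
        finsuppTensorFinsupp'_single_tmul_single]
      rw [hmkC, QuotientAddGroup.mk'_apply, QuotientAddGroup.mk'_apply,
        QuotientAddGroup.eq_iff_sub_mem, hC]
      have hpi : ((h, k) : H × K)⁻¹ = (h, k⁻¹) := by rw [Prod.inv_mk, hinv]
      have heq : (Finsupp.single ((h, k⁻¹) : H × K) (m * n)) - Finsupp.single ((h, k) : H × K) (m * n)
          = -((m * n) • (Finsupp.single ((h, k) : H × K) 1 - I (Finsupp.single ((h, k) : H × K) 1))) := by
        simp only [hI, hpi, smul_sub, Finsupp.smul_single, smul_eq_mul, mul_one]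
        abel
      rw [heq]
      exact neg_mem (zsmul_mem (AddSubgroup.subset_closure
        (Set.mem_range_self (Finsupp.single ((h, k) : H × K) 1))) _)
    intro f a
    exact LinearMap.congr_fun (LinearMap.congr_fun h2 f) a
  -- lifted bilinear map to the quotient N ⧸ D
  have hDker : ∀ (f : H →₀ ℤ) (d : N), d ∈ D → Φ f d = 0 := by
    intro f d hd
    have : D ≤ AddSubgroup.comap (Φ f).toAddMonoidHom ⊥ := by
      rw [hD]
      refine AddSubgroup.closure_le _ |>.2 ?_
      rintro _ ⟨a, rfl⟩
      simp only [AddSubgroup.mem_comap, AddSubgroup.mem_bot, LinearMap.toAddMonoidHom_coe]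
      show Φ f (a - J a) = 0
      rw [map_sub, key]
      exact sub_self _
    simpa using this hd
  set b₁ : (H →₀ ℤ) → (N ⧸ D) →+ (M ⧸ C) := fun f =>
    QuotientAddGroup.lift D (Φ f).toAddMonoidHom (hDker f) with hb₁
  have hb₁_apply : ∀ f a, b₁ f (mkD a) = Φ f a := fun f a => rfl
  set b : (H →₀ ℤ) →ₗ[ℤ] (N ⧸ D) →ₗ[ℤ] (M ⧸ C) :=
    { toFun := fun f => (b₁ f).toIntLinearMap
      map_add' := by
        intro f g
        apply LinearMap.ext
        intro x
        induction x using QuotientAddGroup.induction_on with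
        | H a =>
            show b₁ (f + g) (mkD a) = b₁ f (mkD a) + b₁ g (mkD a)
            rw [hb₁_apply, hb₁_apply, hb₁_apply, map_add, LinearMap.add_apply]
      map_smul' := by
        intro n f
        apply LinearMap.ext
        intro x
        induction x using QuotientAddGroup.induction_on with
        | H a =>
            show b₁ (n • f) (mkD a) = n • b₁ f (mkD a)
            rw [hb₁_apply, hb₁_apply, map_smul, LinearMap.smul_apply] } with hb
  set g : ((H →₀ ℤ) ⊗[ℤ] (N ⧸ D)) →ₗ[ℤ] (M ⧸ C) := TensorProduct.lift b with hg
  have hg_apply : ∀ f y, g (f ⊗ₜ y) = b₁ f y := fun f y => rfl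
  -- the forward map
  set φ :=
    (LinearMap.lTensor (H →₀ ℤ) mkD.toIntLinearMap) ∘ₗ e.symm.toLinearMap with hφ
  have hCker : ∀ m ∈ C, φ m = 0 := by
    intro m hm
    have h2 : φ.toAddMonoidHom.comp I = φ.toAddMonoidHom := by
      apply Finsupp.addHom_ext
      intro x n
      obtain ⟨h, k⟩ := x
      show φ (I (Finsupp.single (h, k) n)) = φ (Finsupp.single (h, k) n)
      rw [hIsingle]
      have hpi : ((h, k) : H × K)⁻¹ = (h, k⁻¹) := by rw [Prod.inv_mk, hinv]
      rw [hpi, hφ]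
      simp only [LinearMap.comp_apply, LinearEquiv.coe_toLinearMap]
      rw [he, finsuppTensorFinsupp'_symm_single_eq_single_one_tmul,
        finsuppTensorFinsupp'_symm_single_eq_single_one_tmul]
      simp only [LinearMap.lTensor_tmul, AddMonoidHom.coe_toIntLinearMap]
      congr 1
      rw [hmkD, QuotientAddGroup.mk'_apply, QuotientAddGroup.mk'_apply,
        QuotientAddGroup.eq_iff_sub_mem, hD]
      have heq : (Finsupp.single k⁻¹ n : N) - Finsupp.single k n
          = -(n • (Finsupp.single k 1 - J (Finsupp.single k 1))) := by
        simp only [hJ, smul_sub, Finsupp.smul_single, smul_eq_mul, mul_one]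
        abel
      rw [heq]
      exact neg_mem (zsmul_mem (AddSubgroup.subset_closure
        (Set.mem_range_self (Finsupp.single k (1 : ℤ)))) _)
    have : C ≤ AddSubgroup.comap φ.toAddMonoidHom ⊥ := by
      rw [hC]
      refine AddSubgroup.closure_le _ |>.2 ?_
      rintro _ ⟨a, rfl⟩
      simp only [AddSubgroup.mem_comap, AddSubgroup.mem_bot, LinearMap.toAddMonoidHom_coe]
      show φ (a - I a) = 0
      rw [map_sub]
      have := DFunLike.congr_fun h2 a
      simp only [AddMonoidHom.comp_apply, LinearMap.toAddMonoidHom_coe] at this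
      rw [this, sub_self]
    simpa using this hm
  set f' : (M ⧸ C) →+ ((H →₀ ℤ) ⊗[ℤ] (N ⧸ D)) :=
    QuotientAddGroup.lift C φ.toAddMonoidHom hCker with hf'
  have hf'_apply : ∀ m, f' (mkC m) = φ m := fun m => rfl
  -- g ∘ lTensor = mk ∘ e
  have hge : ∀ u : (H →₀ ℤ) ⊗[ℤ] N,
      g (LinearMap.lTensor (H →₀ ℤ) mkD.toIntLinearMap u) = mkC (e u) := by
    intro u
    induction u using TensorProduct.induction_on with
    | zero => rw [map_zero, map_zero, map_zero, map_zero]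
    | tmul f a =>
        rw [LinearMap.lTensor_tmul, hg_apply]
        exact hb₁_apply f a
    | add x y hx hy => rw [map_add, map_add, map_add, hx, hy, map_add]
  -- compositions
  have comp1 : ∀ x, g.toAddMonoidHom.comp f' x = x := by
    intro x
    induction x using QuotientAddGroup.induction_on with
    | H m =>
        show g (f' (mkC m)) = mkC m
        rw [hf'_apply, hφ]
        simp only [LinearMap.comp_apply, LinearEquiv.coe_toLinearMap]
        rw [hge, LinearEquiv.apply_symm_apply]
  have comp2 : ∀ x, f'.comp g.toAddMonoidHom x = x := by
    intro x
    induction x using TensorProduct.induction_on with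
    | zero => simp
    | tmul fh y =>
        induction y using QuotientAddGroup.induction_on with
        | H a =>
            show f' (g (fh ⊗ₜ mkD a)) = fh ⊗ₜ mkD a
            rw [hg_apply, hb₁_apply, hΦ_apply, hf'_apply, hφ]
            simp only [LinearMap.comp_apply, LinearEquiv.coe_toLinearMap,
              LinearEquiv.symm_apply_apply, LinearMap.lTensor_tmul,
              AddMonoidHom.coe_toIntLinearMap]
    | add x y hx hy =>
        simp only [AddMonoidHom.comp_apply] at hx hy ⊢
        rw [map_add, map_add, hx, hy]
  exact ⟨f'.toAddEquiv g.toAddMonoidHom (AddMonoidHom.ext comp1) (AddMonoidHom.ext comp2)⟩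
end

section
/- Let K be an abelian group with no elements of order 2 (i.e., k² = 1 implies k = 1). Then the coinvariants of the free abelian group K →₀ ℤ under the additive involution induced by inversion (sending the basis element of k to the basis element of k⁻¹) form a torsion-free abelian group. -/
/-- The setoid on `K` identifying `k` with `k⁻¹`. -/
def invSetoid (K : Type*) [Group K] : Setoid K :=
  ⟨fun k l => k = l ∨ k = l⁻¹, by
    constructor
    · intro k; exact Or.inl rfl
    · rintro k l (rfl | rfl)
      · exact Or.inl rfl
      · exact Or.inr (inv_inv l).symm
    · rintro k l m (rfl | rfl) (rfl | rfl)
      · exact Or.inl rfl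
      · exact Or.inr rfl
      · exact Or.inr rfl
      · exact Or.inl (inv_inv m)⟩

/-- A choice of representative for each `{k, k⁻¹}` orbit. -/
noncomputable def invRep (K : Type*) [Group K] (k : K) : K :=
  (Quotient.mk (invSetoid K) k).out

lemma invRep_spec (K : Type*) [Group K] (k : K) :
    invRep K k = k ∨ invRep K k = k⁻¹ :=
  Quotient.exact (Quotient.out_eq (Quotient.mk (invSetoid K) k))

lemma invRep_inv (K : Type*) [Group K] (k : K) : invRep K k⁻¹ = invRep K k := by
  unfold invRep
  congr 1
  exact Quotient.sound (Or.inr rfl)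

/-- Let `K` be an abelian group with no elements of order `2`.  Then the coinvariants of
the free abelian group `K →₀ ℤ` under the additive involution induced by inversion on
`K` form a torsion-free abelian group. -/
theorem coinvariants_torsion_free_of_no_two_torsion {K : Type*} [CommGroup K]
    (hK : ∀ k : K, k ^ 2 = 1 → k = 1)
    (J : (K →₀ ℤ) →+ (K →₀ ℤ))
    (hJ : ∀ k : K, J (Finsupp.single k 1) = Finsupp.single k⁻¹ 1)
    (D : AddSubgroup (K →₀ ℤ))
    (hD : D = AddSubgroup.closure (Set.range fun a => a - J a)) :
    ∀ g : (K →₀ ℤ) ⧸ D, g ≠ 0 → ¬IsOfFinAddOrder g := by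
  classical
  set ψ : (K →₀ ℤ) →+ (K →₀ ℤ) := Finsupp.mapDomain.addMonoidHom (invRep K) with hψ
  have hψ_single : ∀ (k : K) (n : ℤ), ψ (Finsupp.single k n) = Finsupp.single (invRep K k) n := by
    intro k n
    simp [hψ, Finsupp.mapDomain.addMonoidHom_apply, Finsupp.mapDomain_single]
  -- J on general singles
  have hJ_single : ∀ (k : K) (n : ℤ), J (Finsupp.single k n) = Finsupp.single k⁻¹ n := by
    intro k n
    have : Finsupp.single k n = n • Finsupp.single k (1 : ℤ) := by
      simp [Finsupp.smul_single]
    rw [this, map_zsmul, hJ, Finsupp.smul_single]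
    simp
  -- ψ kills generators
  have hψJ : ∀ a : K →₀ ℤ, ψ (J a) = ψ a := by
    have : ψ.comp J = ψ := by
      apply Finsupp.addHom_ext
      intro k n
      simp [AddMonoidHom.comp_apply, hJ_single, hψ_single, invRep_inv]
    intro a
    exact DFunLike.congr_fun this a
  have hDker : D ≤ ψ.ker := by
    rw [hD, AddSubgroup.closure_le]
    rintro _ ⟨a, rfl⟩
    simp [AddMonoidHom.mem_ker, map_sub, hψJ]
  -- x - ψ x ∈ D
  have hsub : ∀ x : K →₀ ℤ, x - ψ x ∈ D := by
    intro x
    induction x using Finsupp.induction with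
    | zero => simpa using D.zero_mem
    | single_add k n f _ _ ih =>
      have : Finsupp.single k n + f - ψ (Finsupp.single k n + f)
          = (Finsupp.single k n - ψ (Finsupp.single k n)) + (f - ψ f) := by
        rw [map_add]; abel
      rw [this]
      refine D.add_mem ?_ ih
      rw [hψ_single]
      rcases invRep_spec K k with h | h
      · rw [h]; simpa using D.zero_mem
      · rw [h]
        have : Finsupp.single k n - Finsupp.single k⁻¹ n
            = n • (Finsupp.single k (1 : ℤ) - J (Finsupp.single k (1 : ℤ))) := by
          rw [hJ, smul_sub, Finsupp.smul_single, Finsupp.smul_single]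
          simp
        rw [this]
        exact D.zsmul_mem (hD ▸ AddSubgroup.subset_closure ⟨_, rfl⟩) n
  -- main argument
  intro g hg hfin
  obtain ⟨n, hn, hng⟩ := isOfFinAddOrder_iff_nsmul_eq_zero.mp hfin
  obtain ⟨x, rfl⟩ := QuotientAddGroup.mk_surjective g
  apply hg
  have hmem : n • x ∈ D := by
    rwa [← QuotientAddGroup.eq_zero_iff, QuotientAddGroup.mk_nsmul]
  have : (n : ℤ) • ψ x = 0 := by
    have := hDker hmem
    rw [AddMonoidHom.mem_ker] at this
    rw [← this]
    simp [map_nsmul]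
  have hψx : ψ x = 0 := by
    have hn' : (n : ℤ) ≠ 0 := by exact_mod_cast hn.ne'
    exact (smul_eq_zero.mp this).resolve_left hn'
  have : x ∈ D := by
    have := hsub x
    rwa [hψx, sub_zero] at this
  exact (QuotientAddGroup.eq_zero_iff x).mpr this
end
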